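/- Let μ be a critical offspring distribution and let W^prim be the Prim path of a μ-Galton–Watson tree whose edges carry i.i.d. positive weights independent of the tree. Then W^prim has the same distribution as (X(0), X(1), ..., X(ζ₁)), where X is a random walk started at 0 with step distribution μ̂(k) = μ(k+1) on {-1,0,1,...} and ζ₁ = inf{k ≥ 0 : X(k) = -1}. In particular the total progeny of the tree has the same law as ζ₁. -/

import Mathlib

open MeasureTheory ProbabilityTheory Set Filter Topology


instance : MeasurableSpace (Finset (List ℕ)) := ⊤

def IsPlaneTree (τ : Finset (List ℕ)) : Prop :=
  [] ∈ τ ∧ (∀ v ∈ τ, v.tail ∈ τ) ∧ ∀ (u : List ℕ) (i : ℕ), (i + 1) :: u ∈ τ → i :: u ∈ τ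

def childCount (τ : Finset (List ℕ)) (u : List ℕ) : ℕ :=
  (τ.filter fun v => v ≠ [] ∧ v.tail = u).card

def IsPrimOrder (τ : Finset (List ℕ)) (w : List ℕ → ℝ) (u : ℕ → List ℕ) : Prop :=
  u 0 = [] ∧
  (∀ k < τ.card, u k ∈ τ) ∧
  (∀ j k, j < τ.card → k < τ.card → u j = u k → j = k) ∧
  ∀ k, 0 < k → k < τ.card →
    (∃ m < k, (u k).tail = u m) ∧
    ∀ v ∈ τ, (∀ m < k, u m ≠ v) → (∃ m < k, v.tail = u m) → w (u k) ≤ w v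

namespace GWPrim


/-- canonical weight-minimizer of a list (junk `[]` on the empty list). -/
noncomputable def pickL (x : List ℕ → ℝ) : List (List ℕ) → List ℕ
  | [] => []
  | v :: l => if l = [] then v else (if x v ≤ x (pickL x l) then v else pickL x l)

lemma pickL_nil (x : List ℕ → ℝ) : pickL x ([] : List (List ℕ)) = ([] : List ℕ) := rfl

lemma pickL_cons (x : List ℕ → ℝ) (v : List ℕ) (l : List (List ℕ)) :
    pickL x (v :: l) = if l = [] then v else (if x v ≤ x (pickL x l) then v else pickL x l) := rfl

lemma pickL_mem (x : List ℕ → ℝ) : ∀ l : List (List ℕ), l ≠ [] → pickL x l ∈ l := by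
  intro l
  induction l with
  | nil => intro h; exact absurd rfl h
  | cons v l ih =>
    intro _
    rw [pickL_cons]
    by_cases hl : l = []
    · simp [hl]
    · simp only [hl, if_false]
      by_cases hc : x v ≤ x (pickL x l) <;> simp [hc, List.mem_cons, ih hl]

lemma pickL_le (x : List ℕ → ℝ) : ∀ l : List (List ℕ), ∀ v' ∈ l, x (pickL x l) ≤ x v' := by
  intro l
  induction l with
  | nil => intro v' hv'; simp at hv'
  | cons v l ih =>
    intro v' hv'
    rw [pickL_cons]
    by_cases hl : l = []
    · subst hl; simp at hv'; simp [hv']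
    · simp only [hl, if_false]
      rcases List.mem_cons.1 hv' with rfl | hv'
      · by_cases hc : x v' ≤ x (pickL x l) <;> simp [hc, le_of_lt, lt_of_not_ge]
      · by_cases hc : x v ≤ x (pickL x l)
        · simp only [hc, if_true]; exact le_trans hc (ih v' hv')
        · simp only [hc, if_false]; exact ih v' hv'

/-- canonical weight-minimizer of a finset. -/
noncomputable def pick (x : List ℕ → ℝ) (C : Finset (List ℕ)) : List ℕ :=
  pickL x C.toList

lemma pick_mem {x : List ℕ → ℝ} {C : Finset (List ℕ)} (h : C.Nonempty) : pick x C ∈ C := by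
  have : C.toList ≠ [] := by
    simpa [Finset.toList_eq_nil] using Finset.nonempty_iff_ne_empty.1 h
  exact Finset.mem_toList.1 (pickL_mem x C.toList this)

lemma pick_le {x : List ℕ → ℝ} {C : Finset (List ℕ)} {v : List ℕ} (hv : v ∈ C) :
    x (pick x C) ≤ x v :=
  pickL_le x C.toList v (Finset.mem_toList.2 hv)

/-- candidate (active) vertices: in `τ`, unvisited, parent visited. -/
def cand (τ V : Finset (List ℕ)) : Finset (List ℕ) :=
  τ.filter fun v => v ∉ V ∧ v.tail ∈ V

lemma mem_cand {τ V : Finset (List ℕ)} {v : List ℕ} :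
    v ∈ cand τ V ↔ v ∈ τ ∧ v ∉ V ∧ v.tail ∈ V := by
  simp [cand, Finset.mem_filter, and_assoc]

/-- Prim exploration: state after `k` steps is `(visited set, current vertex)`. -/
noncomputable def primAux (τ : Finset (List ℕ)) (x : List ℕ → ℝ) : ℕ → Finset (List ℕ) × List ℕ
  | 0 => ({[]}, [])
  | k+1 =>
    let s := primAux τ x k
    let u := pick x (cand τ s.1)
    (insert u s.1, u)

noncomputable def primSeq (τ : Finset (List ℕ)) (x : List ℕ → ℝ) (k : ℕ) : List ℕ :=
  (primAux τ x k).2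

noncomputable def primVis (τ : Finset (List ℕ)) (x : List ℕ → ℝ) (k : ℕ) : Finset (List ℕ) :=
  (primAux τ x k).1

lemma primSeq_zero (τ x) : primSeq τ x 0 = [] := rfl
lemma primVis_zero (τ x) : primVis τ x 0 = {[]} := rfl
lemma primSeq_succ (τ x k) : primSeq τ x (k+1) = pick x (cand τ (primVis τ x k)) := rfl
lemma primVis_succ (τ x k) :
    primVis τ x (k+1) = insert (primSeq τ x (k+1)) (primVis τ x k) := rfl

lemma primVis_eq_image (τ x) : ∀ k, primVis τ x k = (Finset.range (k+1)).image (primSeq τ x) := by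
  intro k
  induction k with
  | zero => simp [primVis_zero, primSeq_zero]
  | succ k ih =>
    rw [primVis_succ, ih, ← Finset.image_insert, ← Finset.range_add_one]

lemma mem_primVis_iff (τ x k v) : v ∈ primVis τ x k ↔ ∃ m ≤ k, primSeq τ x m = v := by
  rw [primVis_eq_image]
  simp [Nat.lt_succ_iff]

/-- key nonemptiness: a plane tree always has an unexplored vertex adjacent to the
visited set, as long as the visited set contains the root and misses some vertex. -/
lemma cand_nonempty {τ V : Finset (List ℕ)} (hτ : IsPlaneTree τ) (hroot : [] ∈ V)
    (hne : (τ \ V).Nonempty) : (cand τ V).Nonempty := by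
  obtain ⟨v, hv, hmin⟩ := Finset.exists_min_image (τ \ V) (fun v => v.length) hne
  rw [Finset.mem_sdiff] at hv
  refine ⟨v, Finset.mem_filter.2 ⟨hv.1, hv.2, ?_⟩⟩
  have hvne : v ≠ [] := by rintro rfl; exact hv.2 hroot
  have htail : v.tail ∈ τ := hτ.2.1 v hv.1
  by_contra htv
  have : v.tail ∈ τ \ V := Finset.mem_sdiff.2 ⟨htail, htv⟩
  have hlt : v.tail.length < v.length := by
    cases v with
    | nil => exact absurd rfl hvne
    | cons a l => simp
  exact absurd (hmin _ this) (not_le.2 hlt)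

lemma primVis_good {τ : Finset (List ℕ)} (hτ : IsPlaneTree τ) (x : List ℕ → ℝ) :
    ∀ k < τ.card, primVis τ x k ⊆ τ ∧ (primVis τ x k).card = k + 1 := by
  intro k
  induction k with
  | zero =>
    intro _
    constructor
    · intro v hv
      rw [primVis_zero, Finset.mem_singleton] at hv
      exact hv ▸ hτ.1
    · simp [primVis_zero]
  | succ k ih =>
    intro hk
    obtain ⟨hsub, hcard⟩ := ih (Nat.lt_of_succ_lt hk)
    have hne : (τ \ primVis τ x k).Nonempty := by
      rw [← Finset.card_pos, Finset.card_sdiff_of_subset hsub, hcard]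
      omega
    have hroot : [] ∈ primVis τ x k := by
      rw [mem_primVis_iff]; exact ⟨0, Nat.zero_le _, primSeq_zero τ x⟩
    have hcand := cand_nonempty hτ hroot hne
    have hmem := pick_mem (x := x) hcand
    rw [mem_cand] at hmem
    constructor
    · rw [primVis_succ]
      exact Finset.insert_subset (by rw [primSeq_succ]; exact hmem.1) hsub
    · rw [primVis_succ, Finset.card_insert_of_notMem (by rw [primSeq_succ]; exact hmem.2.1),
        hcard]

lemma primSeq_mem_cand {τ : Finset (List ℕ)} (hτ : IsPlaneTree τ) (x : List ℕ → ℝ)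
    {k : ℕ} (hk : k + 1 < τ.card) :
    primSeq τ x (k+1) ∈ cand τ (primVis τ x k) := by
  obtain ⟨hsub, hcard⟩ := primVis_good hτ x k (Nat.lt_of_succ_lt hk)
  have hne : (τ \ primVis τ x k).Nonempty := by
    rw [← Finset.card_pos, Finset.card_sdiff_of_subset hsub, hcard]
    omega
  have hroot : [] ∈ primVis τ x k := by
    rw [mem_primVis_iff]; exact ⟨0, Nat.zero_le _, primSeq_zero τ x⟩
  rw [primSeq_succ]
  exact pick_mem (cand_nonempty hτ hroot hne)

lemma primSeq_not_visited {τ : Finset (List ℕ)} (hτ : IsPlaneTree τ) (x : List ℕ → ℝ)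
    {k : ℕ} (hk : k + 1 < τ.card) {m : ℕ} (hm : m ≤ k) :
    primSeq τ x (k+1) ≠ primSeq τ x m := by
  have h := primSeq_mem_cand hτ x hk
  rw [mem_cand] at h
  intro heq
  exact h.2.1 ((mem_primVis_iff τ x k _).2 ⟨m, hm, heq.symm⟩)

lemma primSeq_injOn {τ : Finset (List ℕ)} (hτ : IsPlaneTree τ) (x : List ℕ → ℝ) :
    ∀ j k, j < τ.card → k < τ.card → primSeq τ x j = primSeq τ x k → j = k := by
  have key : ∀ j k, j < k → k < τ.card → primSeq τ x j ≠ primSeq τ x k := by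
    intro j k hjk hk
    obtain ⟨k, rfl⟩ := Nat.exists_eq_add_of_lt hjk
    intro h
    exact primSeq_not_visited hτ x (by omega : j + k + 1 < τ.card) (by omega : j ≤ j + k) h.symm
  intro j k hj hk heq
  rcases lt_trichotomy j k with h | h | h
  · exact absurd heq (key j k h hk)
  · exact h
  · exact absurd heq.symm (key k j h hj)

lemma primVis_last {τ : Finset (List ℕ)} (hτ : IsPlaneTree τ) (x : List ℕ → ℝ) :
    primVis τ x (τ.card - 1) = τ := by
  have hpos : 0 < τ.card := Finset.card_pos.2 ⟨[], hτ.1⟩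
  obtain ⟨hsub, hcard⟩ := primVis_good hτ x (τ.card - 1) (by omega)
  apply Finset.eq_of_subset_of_card_le hsub
  omega

lemma primSeq_isPrimOrder {τ : Finset (List ℕ)} (hτ : IsPlaneTree τ) (x : List ℕ → ℝ) :
    IsPrimOrder τ x (primSeq τ x) := by
  refine ⟨primSeq_zero τ x, ?_, primSeq_injOn hτ x, ?_⟩
  · intro k hk
    cases k with
    | zero => exact (primSeq_zero τ x) ▸ hτ.1
    | succ k =>
      have h := primSeq_mem_cand hτ x hk
      rw [mem_cand] at h
      exact h.1
  · intro k hk0 hk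
    cases k with
    | zero => omega
    | succ k =>
      have h := primSeq_mem_cand hτ x hk
      rw [mem_cand] at h
      constructor
      · obtain ⟨m, hm, hmv⟩ := (mem_primVis_iff τ x k _).1 h.2.2
        exact ⟨m, Nat.lt_succ_of_le hm, hmv.symm⟩
      · intro v hv hunvis htail
        have hvc : v ∈ cand τ (primVis τ x k) := by
          refine mem_cand.2 ⟨hv, ?_, ?_⟩
          · intro hvm
            obtain ⟨m, hm, hmv⟩ := (mem_primVis_iff τ x k _).1 hvm
            exact hunvis m (Nat.lt_succ_of_le hm) hmv
          · obtain ⟨m, hm, hmv⟩ := htail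
            rw [hmv]
            exact (mem_primVis_iff τ x k _).2 ⟨m, Nat.lt_succ_iff.1 hm, rfl⟩
        rw [primSeq_succ]
        exact pick_le hvc

/-- uniqueness of the Prim order when the weights are injective. -/
lemma prim_unique {τ : Finset (List ℕ)} (hτ : IsPlaneTree τ) {x : List ℕ → ℝ}
    (hx : Set.InjOn x ↑τ) {u : ℕ → List ℕ} (hu : IsPrimOrder τ x u) :
    ∀ k < τ.card, u k = primSeq τ x k := by
  intro k
  induction k using Nat.strong_induction_on with
  | _ k ih =>
    intro hk
    cases k with
    | zero => rw [hu.1, primSeq_zero]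
    | succ k =>
      have hvis : ∀ m ≤ k, u m = primSeq τ x m := fun m hm =>
        ih m (Nat.lt_succ_of_le hm) (lt_trans (Nat.lt_succ_of_le hm) hk)
      have hcand : u (k+1) ∈ cand τ (primVis τ x k) := by
        refine mem_cand.2 ⟨hu.2.1 _ hk, ?_, ?_⟩
        · intro hmem
          obtain ⟨m, hm, hmv⟩ := (mem_primVis_iff τ x k _).1 hmem
          have : m = k + 1 := hu.2.2.1 m (k+1) (lt_trans (Nat.lt_succ_of_le hm) hk) hk
            (by rw [hvis m hm, hmv])
          omega
        · obtain ⟨m, hm, hmv⟩ := (hu.2.2.2 (k+1) (Nat.succ_pos k) hk).1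
          rw [hmv, hvis m (Nat.lt_succ_iff.1 hm)]
          exact (mem_primVis_iff τ x k _).2 ⟨m, Nat.lt_succ_iff.1 hm, rfl⟩
      have h1 : x (primSeq τ x (k+1)) ≤ x (u (k+1)) := by
        rw [primSeq_succ]; exact pick_le hcand
      have hpcand := primSeq_mem_cand hτ x hk
      rw [mem_cand] at hpcand
      have h2 : x (u (k+1)) ≤ x (primSeq τ x (k+1)) := by
        refine (hu.2.2.2 (k+1) (Nat.succ_pos k) hk).2 _ hpcand.1 ?_ ?_
        · intro m hm heq
          apply hpcand.2.1
          rw [← heq, hvis m (Nat.lt_succ_iff.1 hm)]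
          exact (mem_primVis_iff τ x k _).2 ⟨m, Nat.lt_succ_iff.1 hm, rfl⟩
        · obtain ⟨m, hm, hmv⟩ := (mem_primVis_iff τ x k _).1 hpcand.2.2
          exact ⟨m, Nat.lt_succ_of_le hm, by rw [← hmv, hvis m hm]⟩
      exact hx (hu.2.1 _ hk) hpcand.1 (le_antisymm h2 h1)

/-! ### children of a vertex in a plane tree -/

lemma lowerClosed_eq_range {I : Finset ℕ} (h : ∀ i, i + 1 ∈ I → i ∈ I) :
    I = Finset.range I.card := by
  have hdc : ∀ d j, j + d ∈ I → j ∈ I := by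
    intro d
    induction d with
    | zero => intro j hj; simpa using hj
    | succ d ih =>
      intro j hj
      have : (j + 1) + d ∈ I := by rwa [show (j + 1) + d = j + (d + 1) by omega]
      exact h j (ih (j+1) this)
  apply Finset.ext
  intro i
  simp only [Finset.mem_range]
  constructor
  · intro hi
    by_contra hge
    push_neg at hge
    have hsub : Finset.range (i+1) ⊆ I := by
      intro j hj
      simp only [Finset.mem_range, Nat.lt_succ_iff] at hj
      exact hdc (i - j) j (by rwa [show j + (i - j) = i by omega])
    have := Finset.card_le_card hsub
    simp only [Finset.card_range] at this
    omega
  · intro hi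
    by_contra hni
    have hsub : I ⊆ Finset.range i := by
      intro j hj
      simp only [Finset.mem_range]
      by_contra hge
      push_neg at hge
      exact hni (hdc (j - i) i (by rwa [show i + (j - i) = j by omega]))
    have := Finset.card_le_card hsub
    simp only [Finset.card_range] at this
    omega

lemma children_eq {τ : Finset (List ℕ)} (hτ : IsPlaneTree τ) (u : List ℕ) :
    τ.filter (fun v => v ≠ [] ∧ v.tail = u)
      = (Finset.range (childCount τ u)).image (fun i => i :: u) := by
  set S := τ.filter (fun v => v ≠ [] ∧ v.tail = u) with hS
  have hrep : ∀ v ∈ S, v = v.headI :: u := by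
    intro v hv
    rw [hS, Finset.mem_filter] at hv
    rcases v with _ | ⟨a, l⟩
    · exact absurd rfl hv.2.1
    · simp only [List.tail_cons] at hv
      rw [hv.2.2]; rfl
  have hSimg : S = (S.image List.headI).image (fun i => i :: u) := by
    apply Finset.ext
    intro v
    simp only [Finset.mem_image]
    constructor
    · intro hv
      exact ⟨v.headI, ⟨v, hv, rfl⟩, (hrep v hv).symm⟩
    · rintro ⟨i, ⟨v', hv', rfl⟩, rfl⟩
      rwa [← hrep v' hv']
  have hinj : Set.InjOn List.headI (S : Set (List ℕ)) := by
    intro a ha b hb hab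
    rw [hrep a ha, hrep b hb, hab]
  have hcard : (S.image List.headI).card = S.card := Finset.card_image_of_injOn hinj
  have hlow : ∀ i, i + 1 ∈ S.image List.headI → i ∈ S.image List.headI := by
    intro i hi
    rw [Finset.mem_image] at hi ⊢
    obtain ⟨v, hv, hvi⟩ := hi
    have : v = (i+1) :: u := by rw [hrep v hv, hvi]
    have hmem : (i+1) :: u ∈ τ := by
      rw [← this]; exact Finset.mem_filter.1 (hS ▸ hv) |>.1
    have : i :: u ∈ S := by
      rw [hS, Finset.mem_filter]
      exact ⟨hτ.2.2 u i hmem, by simp, by simp⟩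
    exact ⟨i :: u, this, rfl⟩
  have := lowerClosed_eq_range hlow
  rw [hSimg, this, hcard]
  rfl

lemma child_mem_iff {τ : Finset (List ℕ)} (hτ : IsPlaneTree τ) (u : List ℕ) (i : ℕ) :
    i :: u ∈ τ ↔ i < childCount τ u := by
  constructor
  · intro h
    have : i :: u ∈ τ.filter (fun v => v ≠ [] ∧ v.tail = u) :=
      Finset.mem_filter.2 ⟨h, by simp, by simp⟩
    rw [children_eq hτ u, Finset.mem_image] at this
    obtain ⟨j, hj, hji⟩ := this
    simp only [List.cons.injEq] at hji
    rw [← hji.1]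
    exact Finset.mem_range.1 hj
  · intro h
    have : i :: u ∈ (Finset.range (childCount τ u)).image (fun i => i :: u) :=
      Finset.mem_image.2 ⟨i, Finset.mem_range.2 h, rfl⟩
    rw [← children_eq hτ u, Finset.mem_filter] at this
    exact this.1

lemma sum_childCount {τ : Finset (List ℕ)} (hτ : IsPlaneTree τ) :
    ∑ v ∈ τ, childCount τ v = τ.card - 1 := by
  have hfib := Finset.card_eq_sum_card_fiberwise
    (f := List.tail) (s := τ.filter (fun v => v ≠ [])) (t := τ)
    (fun v hv => hτ.2.1 v (Finset.mem_filter.1 hv).1)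
  have h1 : (τ.filter (fun v => v ≠ [])).card = τ.card - 1 := by
    rw [Finset.filter_ne', Finset.card_erase_of_mem hτ.1]
  have h2 : ∀ u, ((τ.filter (fun v => v ≠ [])).filter (fun v => v.tail = u)).card
      = childCount τ u := by
    intro u
    rw [Finset.filter_filter]
    rfl
  rw [← h1, hfib]
  exact Finset.sum_congr rfl (fun u _ => (h2 u).symm)

/-- the vertices of `τ` are enumerated by any Prim order. -/
lemma primOrder_image {τ : Finset (List ℕ)} (hτ : IsPlaneTree τ) {x : List ℕ → ℝ}
    {u : ℕ → List ℕ} (hu : IsPrimOrder τ x u) :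
    (Finset.range τ.card).image u = τ := by
  have hsub : (Finset.range τ.card).image u ⊆ τ := by
    intro v hv
    rw [Finset.mem_image] at hv
    obtain ⟨k, hk, rfl⟩ := hv
    exact hu.2.1 k (Finset.mem_range.1 hk)
  apply Finset.eq_of_subset_of_card_le hsub
  rw [Finset.card_image_of_injOn, Finset.card_range]
  intro j hj k hk h
  exact hu.2.2.1 j k (by simpa using hj) (by simpa using hk) h

lemma sum_childCount_order {τ : Finset (List ℕ)} (hτ : IsPlaneTree τ) {x : List ℕ → ℝ}
    {u : ℕ → List ℕ} (hu : IsPrimOrder τ x u) :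
    ∑ i ∈ Finset.range τ.card, childCount τ (u i) = τ.card - 1 := by
  have hinj : ∀ j ∈ Finset.range τ.card, ∀ k ∈ Finset.range τ.card, u j = u k → j = k := by
    intro j hj k hk h
    exact hu.2.2.1 j k (by simpa using hj) (by simpa using hk) h
  have himg : ∑ v ∈ (Finset.range τ.card).image u, childCount τ v
      = ∑ i ∈ Finset.range τ.card, childCount τ (u i) := Finset.sum_image hinj
  rw [← himg, primOrder_image hτ hu, sum_childCount hτ]

lemma sum_childCount_order_ge {τ : Finset (List ℕ)} (hτ : IsPlaneTree τ) {x : List ℕ → ℝ}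
    {u : ℕ → List ℕ} (hu : IsPrimOrder τ x u) :
    ∀ k, 0 < k → k < τ.card → k ≤ ∑ i ∈ Finset.range k, childCount τ (u i) := by
  intro k hk0 hk
  have hinj : ∀ j ∈ Finset.range k, ∀ j' ∈ Finset.range k, u j = u j' → j = j' := by
    intro j hj j' hj' h
    exact hu.2.2.1 j j' (lt_trans (Finset.mem_range.1 hj) hk)
      (lt_trans (Finset.mem_range.1 hj') hk) h
  set V := (Finset.range k).image u with hV
  set Snn := τ.filter (fun v => v ≠ [] ∧ v.tail ∈ V) with hSnn
  have step1 : ∑ i ∈ Finset.range k, childCount τ (u i) = ∑ v ∈ V, childCount τ v := by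
    rw [hV, Finset.sum_image hinj]
  have step2 : ∑ v ∈ V, childCount τ v = Snn.card := by
    have hfib := Finset.card_eq_sum_card_fiberwise (f := List.tail) (s := Snn) (t := V)
      (fun v hv => (Finset.mem_filter.1 hv).2.2)
    rw [hfib]
    apply Finset.sum_congr rfl
    intro v hv
    have heq : Snn.filter (fun a => a.tail = v) = τ.filter (fun w => w ≠ [] ∧ w.tail = v) := by
      apply Finset.ext
      intro w
      rw [hSnn, Finset.filter_filter]
      simp only [Finset.mem_filter]
      constructor
      · rintro ⟨hw1, ⟨hw2, _⟩, hw4⟩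
        exact ⟨hw1, hw2, hw4⟩
      · rintro ⟨hw1, hw2, hw3⟩
        exact ⟨hw1, ⟨hw2, hw3 ▸ hv⟩, hw3⟩
    rw [heq]
    rfl
  have step3 : k ≤ Snn.card := by
    have hsub : (Finset.Icc 1 k).image u ⊆ Snn := by
      intro v hv
      rw [Finset.mem_image] at hv
      obtain ⟨j, hj, rfl⟩ := hv
      rw [Finset.mem_Icc] at hj
      have hjcard : j < τ.card := lt_of_le_of_lt hj.2 hk
      rw [hSnn, Finset.mem_filter]
      refine ⟨hu.2.1 j hjcard, ?_, ?_⟩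
      · intro hnil
        have : j = 0 := hu.2.2.1 j 0 hjcard (lt_trans hk0 hk) (by rw [hnil, hu.1])
        omega
      · obtain ⟨m, hm, hmv⟩ := (hu.2.2.2 j (by omega) hjcard).1
        rw [hmv, hV]
        exact Finset.mem_image.2 ⟨m, Finset.mem_range.2 (lt_of_lt_of_le hm hj.2), rfl⟩
    have hcard : ((Finset.Icc 1 k).image u).card = k := by
      rw [Finset.card_image_of_injOn, Nat.card_Icc]
      · omega
      · intro j hj j' hj' h
        simp only [Finset.coe_Icc, Set.mem_Icc] at hj hj'
        exact hu.2.2.1 j j' (lt_of_le_of_lt hj.2 hk) (lt_of_le_of_lt hj'.2 hk) h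
    calc k = ((Finset.Icc 1 k).image u).card := hcard.symm
    _ ≤ Snn.card := Finset.card_le_card hsub
  omega

/-! ### reconstruction of the tree from the weights and the child counts -/

noncomputable def recAux (x : List ℕ → ℝ) (c : ℕ → ℕ) :
    ℕ → Finset (List ℕ) × Finset (List ℕ) × List ℕ
  | 0 => ({[]}, (Finset.range (c 0)).image (fun i => i :: ([] : List ℕ)), [])
  | k+1 =>
    let s := recAux x c k
    let u := pick x s.2.1
    (insert u s.1, (s.2.1.erase u) ∪ (Finset.range (c (k+1))).image (fun i => i :: u), u)

noncomputable def recV (x : List ℕ → ℝ) (c : ℕ → ℕ) (k : ℕ) : Finset (List ℕ) :=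
  (recAux x c k).1
noncomputable def recA (x : List ℕ → ℝ) (c : ℕ → ℕ) (k : ℕ) : Finset (List ℕ) :=
  (recAux x c k).2.1
noncomputable def recU (x : List ℕ → ℝ) (c : ℕ → ℕ) (k : ℕ) : List ℕ :=
  (recAux x c k).2.2

lemma recV_zero (x c) : recV x c 0 = {[]} := rfl
lemma recA_zero (x c) : recA x c 0 = (Finset.range (c 0)).image (fun i => i :: ([] : List ℕ)) := rfl
lemma recU_zero (x c) : recU x c 0 = ([] : List ℕ) := rfl
lemma recU_succ (x c k) : recU x c (k+1) = pick x (recA x c k) := rfl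
lemma recV_succ (x c k) : recV x c (k+1) = insert (recU x c (k+1)) (recV x c k) := rfl
lemma recA_succ (x c k) : recA x c (k+1) =
    ((recA x c k).erase (recU x c (k+1)))
      ∪ (Finset.range (c (k+1))).image (fun i => i :: recU x c (k+1)) := rfl

/-- the children of the `j`-th explored vertex. -/
noncomputable def recCh (x : List ℕ → ℝ) (c : ℕ → ℕ) (j : ℕ) : Finset (List ℕ) :=
  (Finset.range (c j)).image (fun i => i :: recU x c j)

/-- master invariant of the reconstruction. -/
def RecInv (x : List ℕ → ℝ) (c : ℕ → ℕ) (k : ℕ) : Prop :=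
  (∀ i ≤ k, ∀ j ≤ k, recU x c i = recU x c j → i = j) ∧
  recV x c k = (Finset.range (k+1)).image (recU x c) ∧
  recV x c k ∪ recA x c k = insert [] ((Finset.range (k+1)).biUnion (recCh x c)) ∧
  Disjoint (recV x c k) (recA x c k) ∧
  (recA x c k).card + k = ∑ i ∈ Finset.range (k+1), c i

lemma recInv_zero (x c) : RecInv x c 0 := by
  refine ⟨fun i hi j hj _ => by omega, by simp [recV_zero, recU_zero], ?_, ?_, ?_⟩
  · apply Finset.ext
    intro v
    simp [recV_zero, recA_zero, recCh, recU_zero]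
  · rw [Finset.disjoint_left]
    intro v hv hv2
    rw [recV_zero, Finset.mem_singleton] at hv
    rw [recA_zero, Finset.mem_image] at hv2
    obtain ⟨i, _, hi⟩ := hv2
    rw [hv] at hi
    simp at hi
  · rw [recA_zero, Finset.card_image_of_injective _ (fun a b h => by injection h)]
    simp

lemma recInv_succ {x : List ℕ → ℝ} {c : ℕ → ℕ} {k : ℕ} (ih : RecInv x c k)
    (hne : (recA x c k).Nonempty) : RecInv x c (k+1) := by
  obtain ⟨hinj, hV, hVA, hdisj, hcard⟩ := ih
  have hu : recU x c (k+1) ∈ recA x c k := recU_succ x c k ▸ pick_mem hne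
  have hunotV : recU x c (k+1) ∉ recV x c k := Finset.disjoint_right.1 hdisj hu
  have hufresh : ∀ j ≤ k, recU x c (k+1) ≠ recU x c j := by
    intro j hj h
    apply hunotV
    rw [hV, h]
    exact Finset.mem_image.2 ⟨j, Finset.mem_range.2 (Nat.lt_succ_of_le hj), rfl⟩
  have hrep : ∀ v ∈ recV x c k ∪ recA x c k,
      v = [] ∨ ∃ j ≤ k, ∃ i < c j, v = i :: recU x c j := by
    intro v hv
    rw [hVA, Finset.mem_insert] at hv
    rcases hv with hv | hv
    · exact Or.inl hv
    · right
      rw [Finset.mem_biUnion] at hv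
      obtain ⟨j, hj, hvj⟩ := hv
      rw [recCh, Finset.mem_image] at hvj
      obtain ⟨i, hi, hiv⟩ := hvj
      exact ⟨j, Nat.lt_succ_iff.1 (Finset.mem_range.1 hj), i, Finset.mem_range.1 hi, hiv.symm⟩
  have hchfresh : ∀ i : ℕ, (i :: recU x c (k+1)) ∉ recV x c k ∪ recA x c k := by
    intro i hi
    rcases hrep _ hi with h | ⟨j, hj, i', _, h⟩
    · simp at h
    · injection h with h1 h2
      exact hufresh j hj h2
  have hstep : recV x c (k+1) ∪ recA x c (k+1) = (recV x c k ∪ recA x c k) ∪ recCh x c (k+1) := by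
    apply Finset.ext
    intro v
    simp only [recV_succ, recA_succ, recCh, Finset.mem_union, Finset.mem_insert,
      Finset.mem_erase]
    constructor
    · rintro ((rfl | h) | (⟨hne', h⟩ | h))
      · exact Or.inl (Or.inr hu)
      · exact Or.inl (Or.inl h)
      · exact Or.inl (Or.inr h)
      · exact Or.inr h
    · rintro ((h | h) | h)
      · exact Or.inl (Or.inr h)
      · by_cases hvu : v = recU x c (k+1)
        · exact Or.inl (Or.inl hvu)
        · exact Or.inr (Or.inl ⟨hvu, h⟩)
      · exact Or.inr (Or.inr h)
  refine ⟨?_, ?_, ?_, ?_, ?_⟩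
  · intro i hi j hj h
    rcases Nat.lt_succ_iff_lt_or_eq.1 (Nat.lt_succ_of_le hi) with hi' | rfl
    · rcases Nat.lt_succ_iff_lt_or_eq.1 (Nat.lt_succ_of_le hj) with hj' | rfl
      · exact hinj i (Nat.lt_succ_iff.1 hi') j (Nat.lt_succ_iff.1 hj') h
      · exact absurd h.symm (hufresh i (Nat.lt_succ_iff.1 hi'))
    · rcases Nat.lt_succ_iff_lt_or_eq.1 (Nat.lt_succ_of_le hj) with hj' | rfl
      · exact absurd h (hufresh j (Nat.lt_succ_iff.1 hj'))
      · rfl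
  · rw [recV_succ, hV, Finset.range_add_one (n := k+1), Finset.image_insert]
  · have hbu : (Finset.range (k+1+1)).biUnion (recCh x c)
        = recCh x c (k+1) ∪ (Finset.range (k+1)).biUnion (recCh x c) := by
      rw [Finset.range_add_one, Finset.biUnion_insert]
    rw [hstep, hVA, hbu, Finset.insert_union, Finset.union_comm (recCh x c (k+1))]
  · rw [Finset.disjoint_left]
    intro v hv hv2
    rw [recV_succ, Finset.mem_insert] at hv
    rw [recA_succ, Finset.mem_union] at hv2
    rcases hv2 with hv2 | hv2
    · rw [Finset.mem_erase] at hv2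
      rcases hv with rfl | hv
      · exact hv2.1 rfl
      · exact Finset.disjoint_left.1 hdisj hv hv2.2
    · rw [Finset.mem_image] at hv2
      obtain ⟨i, _, rfl⟩ := hv2
      rcases hv with hv | hv
      · have := congrArg List.length hv
        simp at this
      · exact hchfresh i (Finset.mem_union_left _ hv)
  · rw [recA_succ]
    have hd : Disjoint ((recA x c k).erase (recU x c (k+1)))
        ((Finset.range (c (k+1))).image (fun i => i :: recU x c (k+1))) := by
      rw [Finset.disjoint_right]
      intro v hv hv2
      rw [Finset.mem_image] at hv
      obtain ⟨i, _, rfl⟩ := hv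
      exact hchfresh i (Finset.mem_union_right _ (Finset.mem_of_mem_erase hv2))
    rw [Finset.card_union_of_disjoint hd, Finset.card_erase_of_mem hu,
      Finset.card_image_of_injective _ (fun a b h => by injection h), Finset.card_range]
    have hpos : 0 < (recA x c k).card := Finset.card_pos.2 hne
    rw [Finset.sum_range_succ (n := k+1)]
    omega

/-! ### Łukasiewicz sequences and the reconstructed tree -/

def Luk (c : ℕ → ℕ) (n : ℕ) : Prop :=
  0 < n ∧ (∀ k, 0 < k → k < n → k ≤ ∑ i ∈ Finset.range k, c i) ∧
    (∑ i ∈ Finset.range n, c i = n - 1)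

lemma recInv_all {x : List ℕ → ℝ} {c : ℕ → ℕ} {n : ℕ} (hL : Luk c n) :
    ∀ k ≤ n - 1, RecInv x c k := by
  intro k
  induction k with
  | zero => intro _; exact recInv_zero x c
  | succ k ih =>
    intro hk
    have hkn : k ≤ n - 1 := by omega
    have inv := ih hkn
    have hk1n : k + 1 < n := by omega
    have hApos : 0 < (recA x c k).card := by
      have h1 := inv.2.2.2.2
      have h2 := hL.2.1 (k+1) (Nat.succ_pos k) hk1n
      omega
    exact recInv_succ inv (Finset.card_pos.1 hApos)

lemma recA_last {x : List ℕ → ℝ} {c : ℕ → ℕ} {n : ℕ} (hL : Luk c n) :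
    recA x c (n-1) = ∅ := by
  have inv := recInv_all (x := x) hL (n-1) (le_refl _)
  have h := inv.2.2.2.2
  have hn : 0 < n := hL.1
  rw [show n - 1 + 1 = n by omega, hL.2.2] at h
  rw [← Finset.card_eq_zero]
  omega

/-- the reconstructed plane tree. -/
noncomputable def recT (x : List ℕ → ℝ) (c : ℕ → ℕ) (n : ℕ) : Finset (List ℕ) :=
  recV x c (n-1)

lemma recT_eq_VA {x : List ℕ → ℝ} {c : ℕ → ℕ} {n : ℕ} (hL : Luk c n) :
    recT x c n = recV x c (n-1) ∪ recA x c (n-1) := by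
  rw [recA_last hL, Finset.union_empty, recT]

lemma recT_rep {x : List ℕ → ℝ} {c : ℕ → ℕ} {n : ℕ} (hL : Luk c n) :
    ∀ v ∈ recT x c n, v = [] ∨ ∃ j ≤ n - 1, ∃ i < c j, v = i :: recU x c j := by
  have inv := recInv_all (x := x) hL (n-1) (le_refl _)
  intro v hv
  rw [recT_eq_VA hL, inv.2.2.1, Finset.mem_insert] at hv
  rcases hv with hv | hv
  · exact Or.inl hv
  · right
    rw [Finset.mem_biUnion] at hv
    obtain ⟨j, hj, hvj⟩ := hv
    rw [recCh, Finset.mem_image] at hvj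
    obtain ⟨i, hi, hiv⟩ := hvj
    exact ⟨j, Nat.lt_succ_iff.1 (Finset.mem_range.1 hj), i, Finset.mem_range.1 hi, hiv.symm⟩

lemma recT_mem_child {x : List ℕ → ℝ} {c : ℕ → ℕ} {n : ℕ} (hL : Luk c n)
    {j i : ℕ} (hj : j ≤ n - 1) (hi : i < c j) : i :: recU x c j ∈ recT x c n := by
  have inv := recInv_all (x := x) hL (n-1) (le_refl _)
  rw [recT_eq_VA hL, inv.2.2.1]
  apply Finset.mem_insert_of_mem
  exact Finset.mem_biUnion.2 ⟨j, Finset.mem_range.2 (Nat.lt_succ_of_le hj),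
    Finset.mem_image.2 ⟨i, Finset.mem_range.2 hi, rfl⟩⟩

lemma recU_mem_recT {x : List ℕ → ℝ} {c : ℕ → ℕ} {n : ℕ} (hL : Luk c n)
    {j : ℕ} (hj : j ≤ n - 1) : recU x c j ∈ recT x c n := by
  have inv := recInv_all (x := x) hL (n-1) (le_refl _)
  rw [recT, inv.2.1]
  exact Finset.mem_image.2 ⟨j, Finset.mem_range.2 (Nat.lt_succ_of_le hj), rfl⟩

lemma recT_card {x : List ℕ → ℝ} {c : ℕ → ℕ} {n : ℕ} (hL : Luk c n) :
    (recT x c n).card = n := by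
  have inv := recInv_all (x := x) hL (n-1) (le_refl _)
  have hn := hL.1
  rw [recT, inv.2.1, Finset.card_image_of_injOn, Finset.card_range]
  · omega
  · intro a ha b hb h
    simp only [Finset.coe_range, Set.mem_Iio] at ha hb
    exact inv.1 a (Nat.lt_succ_iff.1 ha) b (Nat.lt_succ_iff.1 hb) h

lemma recT_tree {x : List ℕ → ℝ} {c : ℕ → ℕ} {n : ℕ} (hL : Luk c n) :
    IsPlaneTree (recT x c n) := by
  have inv := recInv_all (x := x) hL (n-1) (le_refl _)
  refine ⟨?_, ?_, ?_⟩
  · have := recU_mem_recT (x := x) hL (Nat.zero_le (n-1))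
    rwa [recU_zero] at this
  · intro v hv
    rcases recT_rep hL v hv with rfl | ⟨j, hj, i, _, rfl⟩
    · simpa using hv
    · simpa using recU_mem_recT (x := x) hL hj
  · intro u i hu
    rcases recT_rep hL _ hu with h | ⟨j, hj, i', hi', h⟩
    · simp at h
    · injection h with h1 h2
      subst h2
      subst h1
      exact recT_mem_child hL hj (by omega)

lemma recT_childCount {x : List ℕ → ℝ} {c : ℕ → ℕ} {n : ℕ} (hL : Luk c n)
    {j : ℕ} (hj : j ≤ n - 1) : childCount (recT x c n) (recU x c j) = c j := by
  have inv := recInv_all (x := x) hL (n-1) (le_refl _)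
  have hset : (recT x c n).filter (fun v => v ≠ [] ∧ v.tail = recU x c j)
      = (Finset.range (c j)).image (fun i => i :: recU x c j) := by
    apply Finset.ext
    intro v
    rw [Finset.mem_filter, Finset.mem_image]
    constructor
    · rintro ⟨hv, hvne, hvt⟩
      rcases recT_rep hL v hv with rfl | ⟨j', hj', i, hi, rfl⟩
      · exact absurd rfl hvne
      · simp only [List.tail_cons] at hvt
        have : j' = j := inv.1 j' hj' j hj hvt
        subst this
        exact ⟨i, Finset.mem_range.2 hi, rfl⟩
    · rintro ⟨i, hi, rfl⟩
      exact ⟨recT_mem_child hL hj (Finset.mem_range.1 hi), by simp, by simp⟩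
  rw [childCount, hset, Finset.card_image_of_injective _ (fun a b h => by injection h),
    Finset.card_range]

lemma recVA_subsets {x : List ℕ → ℝ} {c : ℕ → ℕ} {n : ℕ} (hL : Luk c n)
    {k : ℕ} (hk : k ≤ n - 1) :
    recV x c k ⊆ recT x c n ∧ recA x c k ⊆ recT x c n := by
  have invk := recInv_all (x := x) hL k hk
  have invn := recInv_all (x := x) hL (n-1) (le_refl _)
  have hsub : recV x c k ∪ recA x c k ⊆ recT x c n := by
    rw [recT_eq_VA hL, invk.2.2.1, invn.2.2.1]
    apply Finset.insert_subset_insert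
    apply Finset.biUnion_subset_biUnion_of_subset_left
    exact Finset.range_subset_range.2 (by omega)
  exact ⟨fun v hv => hsub (Finset.mem_union_left _ hv),
    fun v hv => hsub (Finset.mem_union_right _ hv)⟩

lemma root_mem_recV (x : List ℕ → ℝ) (c : ℕ → ℕ) (k : ℕ) : [] ∈ recV x c k := by
  induction k with
  | zero => rw [recV_zero]; exact Finset.mem_singleton_self _
  | succ k ih => rw [recV_succ]; exact Finset.mem_insert_of_mem ih

lemma cand_recT {x : List ℕ → ℝ} {c : ℕ → ℕ} {n : ℕ} (hL : Luk c n)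
    {k : ℕ} (hk : k ≤ n - 1) : cand (recT x c n) (recV x c k) = recA x c k := by
  have invk := recInv_all (x := x) hL k hk
  have invn := recInv_all (x := x) hL (n-1) (le_refl _)
  apply Finset.ext
  intro v
  rw [mem_cand]
  constructor
  · rintro ⟨hv, hvV, hvt⟩
    rcases recT_rep hL v hv with rfl | ⟨j, hj, i, hi, rfl⟩
    · exact absurd (root_mem_recV x c k) hvV
    · simp only [List.tail_cons] at hvt
      rw [invk.2.1, Finset.mem_image] at hvt
      obtain ⟨m, hm, hmu⟩ := hvt
      have : m = j := invn.1 m (by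
          have := Finset.mem_range.1 hm; omega) j hj hmu
      subst this
      have : i :: recU x c m ∈ recV x c k ∪ recA x c k := by
        rw [invk.2.2.1]
        apply Finset.mem_insert_of_mem
        exact Finset.mem_biUnion.2 ⟨m, hm, Finset.mem_image.2 ⟨i, Finset.mem_range.2 hi, rfl⟩⟩
      rcases Finset.mem_union.1 this with h | h
      · exact absurd h hvV
      · exact h
  · intro hv
    have hvVA : v ∈ recV x c k ∪ recA x c k := Finset.mem_union_right _ hv
    have hrepk : v = [] ∨ ∃ j ≤ k, ∃ i < c j, v = i :: recU x c j := by
      rw [invk.2.2.1, Finset.mem_insert] at hvVA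
      rcases hvVA with h | h
      · exact Or.inl h
      · right
        rw [Finset.mem_biUnion] at h
        obtain ⟨j, hj, hvj⟩ := h
        rw [recCh, Finset.mem_image] at hvj
        obtain ⟨i, hi, hiv⟩ := hvj
        exact ⟨j, Nat.lt_succ_iff.1 (Finset.mem_range.1 hj), i, Finset.mem_range.1 hi, hiv.symm⟩
    refine ⟨(recVA_subsets hL hk).2 hv, Finset.disjoint_right.1 invk.2.2.2.1 hv, ?_⟩
    rcases hrepk with rfl | ⟨j, hj, i, _, rfl⟩
    · exact absurd (root_mem_recV x c k) (Finset.disjoint_right.1 invk.2.2.2.1 hv)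
    · simp only [List.tail_cons]
      rw [invk.2.1]
      exact Finset.mem_image.2 ⟨j, Finset.mem_range.2 (Nat.lt_succ_of_le hj), rfl⟩

lemma prim_recT {x : List ℕ → ℝ} {c : ℕ → ℕ} {n : ℕ} (hL : Luk c n) :
    ∀ k ≤ n - 1, primSeq (recT x c n) x k = recU x c k
      ∧ primVis (recT x c n) x k = recV x c k := by
  intro k
  induction k with
  | zero =>
    intro _
    exact ⟨by rw [primSeq_zero, recU_zero], by rw [primVis_zero, recV_zero]⟩
  | succ k ih =>
    intro hk
    obtain ⟨hs, hv⟩ := ih (by omega)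
    have h1 : primSeq (recT x c n) x (k+1) = recU x c (k+1) := by
      rw [primSeq_succ, hv, cand_recT hL (by omega : k ≤ n - 1), recU_succ]
    exact ⟨h1, by rw [primVis_succ, h1, hv, recV_succ]⟩

/-- existence: the reconstructed tree has Prim child sequence `c`. -/
lemma recT_spec {x : List ℕ → ℝ} {c : ℕ → ℕ} {n : ℕ} (hL : Luk c n) :
    IsPlaneTree (recT x c n) ∧ (recT x c n).card = n ∧
      ∀ k < n, childCount (recT x c n) (primSeq (recT x c n) x k) = c k := by
  refine ⟨recT_tree hL, recT_card hL, ?_⟩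
  intro k hk
  rw [(prim_recT hL k (by omega)).1]
  exact recT_childCount hL (by omega)

/-- uniqueness: a plane tree with `n` vertices whose Prim child sequence is `c`
is the reconstructed tree. -/
lemma recT_unique {x : List ℕ → ℝ} {c : ℕ → ℕ} {n : ℕ} (hL : Luk c n)
    {τ : Finset (List ℕ)} (hτ : IsPlaneTree τ) (hcard : τ.card = n)
    (hcs : ∀ k < n, childCount τ (primSeq τ x k) = c k) : τ = recT x c n := by
  have invn := recInv_all (x := x) hL (n-1) (le_refl _)
  have hmain : ∀ k ≤ n - 1,
      (∀ m ≤ k, primSeq τ x m = recU x c m) ∧ primVis τ x k = recV x c k := by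
    intro k
    induction k with
    | zero =>
      intro _
      refine ⟨?_, by rw [primVis_zero, recV_zero]⟩
      intro m hm
      rw [Nat.le_zero] at hm
      subst hm
      rw [primSeq_zero, recU_zero]
    | succ k ih =>
      intro hk
      obtain ⟨hprev, hvis⟩ := ih (by omega)
      have invk := recInv_all (x := x) hL k (by omega)
      have hccount : ∀ m ≤ k, childCount τ (recU x c m) = c m := by
        intro m hm
        rw [← hprev m hm]
        exact hcs m (by omega)
      have hcand : cand τ (recV x c k) = recA x c k := by
        apply Finset.ext
        intro v
        rw [mem_cand]
        constructor
        · rintro ⟨hvτ, hvV, hvt⟩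
          rcases v with _ | ⟨a, t⟩
          · exact absurd (root_mem_recV x c k) hvV
          · simp only [List.tail_cons] at hvt
            rw [invk.2.1, Finset.mem_image] at hvt
            obtain ⟨m, hm, hmu⟩ := hvt
            have hmk : m ≤ k := Nat.lt_succ_iff.1 (Finset.mem_range.1 hm)
            subst hmu
            have hlt : a < c m := by
              rw [← hccount m hmk]
              exact (child_mem_iff hτ _ _).1 hvτ
            have : a :: recU x c m ∈ recV x c k ∪ recA x c k := by
              rw [invk.2.2.1]
              apply Finset.mem_insert_of_mem
              exact Finset.mem_biUnion.2 ⟨m, Finset.mem_range.2 (Nat.lt_succ_of_le hmk),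
                Finset.mem_image.2 ⟨a, Finset.mem_range.2 hlt, rfl⟩⟩
            rcases Finset.mem_union.1 this with h | h
            · exact absurd h hvV
            · exact h
        · intro hv
          have hvVA : v ∈ recV x c k ∪ recA x c k := Finset.mem_union_right _ hv
          have hrepk : v = [] ∨ ∃ j ≤ k, ∃ i < c j, v = i :: recU x c j := by
            rw [invk.2.2.1, Finset.mem_insert] at hvVA
            rcases hvVA with h | h
            · exact Or.inl h
            · right
              rw [Finset.mem_biUnion] at h
              obtain ⟨j, hj, hvj⟩ := h
              rw [recCh, Finset.mem_image] at hvj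
              obtain ⟨i, hi, hiv⟩ := hvj
              exact ⟨j, Nat.lt_succ_iff.1 (Finset.mem_range.1 hj), i,
                Finset.mem_range.1 hi, hiv.symm⟩
          have hnotV : v ∉ recV x c k := Finset.disjoint_right.1 invk.2.2.2.1 hv
          rcases hrepk with rfl | ⟨j, hj, i, hi, rfl⟩
          · exact absurd (root_mem_recV x c k) hnotV
          · refine ⟨?_, hnotV, ?_⟩
            · rw [child_mem_iff hτ, hccount j hj]
              exact hi
            · simp only [List.tail_cons]
              rw [invk.2.1]
              exact Finset.mem_image.2 ⟨j, Finset.mem_range.2 (Nat.lt_succ_of_le hj), rfl⟩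
      have h1 : primSeq τ x (k+1) = recU x c (k+1) := by
        rw [primSeq_succ, hvis, hcand, recU_succ]
      refine ⟨?_, by rw [primVis_succ, h1, hvis, recV_succ]⟩
      intro m hm
      rcases Nat.lt_succ_iff_lt_or_eq.1 (Nat.lt_succ_of_le hm) with hm' | rfl
      · exact hprev m (Nat.lt_succ_iff.1 hm')
      · exact h1
  have hvlast := primVis_last hτ x
  rw [hcard] at hvlast
  rw [← hvlast, (hmain (n-1) (le_refl _)).2, recT]

/-! ### measurability of the exploration in the weights -/

lemma measurableSet_pickL (l : List (List ℕ)) (v : List ℕ) :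
    MeasurableSet {x : List ℕ → ℝ | pickL x l = v} := by
  induction l generalizing v with
  | nil =>
    simp only [pickL_nil]
    exact MeasurableSet.const _
  | cons u l ih =>
    by_cases hl : l = []
    · subst hl
      simp only [pickL_cons, if_true]
      exact MeasurableSet.const _
    · have hset : {x : List ℕ → ℝ | pickL x (u :: l) = v}
          = ⋃ v' : List ℕ, {x : List ℕ → ℝ | pickL x l = v'}
            ∩ (({x : List ℕ → ℝ | x u ≤ x v'} ∩ {_x : List ℕ → ℝ | u = v})
              ∪ ({x : List ℕ → ℝ | ¬ x u ≤ x v'} ∩ {_x : List ℕ → ℝ | v' = v})) := by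
        ext x
        simp only [Set.mem_iUnion, Set.mem_inter_iff, Set.mem_union, Set.mem_setOf_eq]
        constructor
        · intro h
          refine ⟨pickL x l, rfl, ?_⟩
          rw [pickL_cons, if_neg hl] at h
          by_cases hc : x u ≤ x (pickL x l)
          · left; exact ⟨hc, by rwa [if_pos hc] at h⟩
          · right; exact ⟨hc, by rwa [if_neg hc] at h⟩
        · rintro ⟨v', hv', (⟨hc, rfl⟩ | ⟨hc, rfl⟩)⟩
          · rw [pickL_cons, if_neg hl, hv', if_pos hc]
          · rw [pickL_cons, if_neg hl, hv', if_neg hc]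
      rw [hset]
      refine MeasurableSet.iUnion fun v' => (ih v').inter (MeasurableSet.union ?_ ?_)
      · exact (measurableSet_le (measurable_pi_apply u) (measurable_pi_apply v')).inter
          (MeasurableSet.const _)
      · exact ((measurableSet_le (measurable_pi_apply u) (measurable_pi_apply v')).compl).inter
          (MeasurableSet.const _)

lemma measurableSet_pick (C : Finset (List ℕ)) (v : List ℕ) :
    MeasurableSet {x : List ℕ → ℝ | pick x C = v} :=
  measurableSet_pickL C.toList v

lemma measurableSet_primAux (τ : Finset (List ℕ)) (k : ℕ)
    (s : Finset (List ℕ) × List ℕ) :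
    MeasurableSet {x : List ℕ → ℝ | primAux τ x k = s} := by
  induction k generalizing s with
  | zero =>
    have : {x : List ℕ → ℝ | primAux τ x 0 = s} = {_x : List ℕ → ℝ | ({[]}, []) = s} := rfl
    rw [this]
    exact MeasurableSet.const _
  | succ k ih =>
    have hset : {x : List ℕ → ℝ | primAux τ x (k+1) = s}
        = ⋃ s' : Finset (List ℕ) × List ℕ,
            ({x : List ℕ → ℝ | primAux τ x k = s'}
              ∩ ({x : List ℕ → ℝ | pick x (cand τ s'.1) = s.2}
                ∩ {_x : List ℕ → ℝ | insert s.2 s'.1 = s.1})) := by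
      ext x
      simp only [Set.mem_iUnion, Set.mem_inter_iff, Set.mem_setOf_eq]
      constructor
      · intro h
        refine ⟨primAux τ x k, rfl, ?_, ?_⟩
        · rw [← h]
          rfl
        · rw [← h]
          show insert (primAux τ x (k+1)).2 (primAux τ x k).1 = _
          rfl
      · rintro ⟨s', hs', hpick, hins⟩
        show (insert (pick x (cand τ (primAux τ x k).1)) (primAux τ x k).1,
          pick x (cand τ (primAux τ x k).1)) = s
        rw [hs', hpick]
        exact Prod.ext (by rw [← hins]) rfl
    rw [hset]
    exact MeasurableSet.iUnion fun s' => (ih s').inter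
      ((measurableSet_pick _ _).inter (MeasurableSet.const _))

lemma measurableSet_primSeq (τ : Finset (List ℕ)) (k : ℕ) (v : List ℕ) :
    MeasurableSet {x : List ℕ → ℝ | primSeq τ x k = v} := by
  have : {x : List ℕ → ℝ | primSeq τ x k = v}
      = ⋃ V : Finset (List ℕ), {x : List ℕ → ℝ | primAux τ x k = (V, v)} := by
    ext x
    simp only [Set.mem_iUnion, Set.mem_setOf_eq, primSeq]
    constructor
    · intro h
      exact ⟨(primAux τ x k).1, Prod.ext rfl h⟩
    · rintro ⟨V, hV⟩
      rw [hV]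
  rw [this]
  exact MeasurableSet.iUnion fun V => measurableSet_primAux τ k (V, v)

/-- the weight event: the Prim child sequence of `τ` is `c` (up to time `n`). -/
def WS (τ : Finset (List ℕ)) (c : ℕ → ℕ) (n : ℕ) : Set (List ℕ → ℝ) :=
  {x | ∀ k < n, childCount τ (primSeq τ x k) = c k}

lemma measurableSet_WS (τ : Finset (List ℕ)) (c : ℕ → ℕ) (n : ℕ) :
    MeasurableSet (WS τ c n) := by
  have : WS τ c n = ⋂ k, ⋂ (_ : k < n),
      ⋃ v : List ℕ, ({x : List ℕ → ℝ | primSeq τ x k = v}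
        ∩ {_x : List ℕ → ℝ | childCount τ v = c k}) := by
    ext x
    simp only [WS, Set.mem_setOf_eq, Set.mem_iInter, Set.mem_iUnion, Set.mem_inter_iff,
      Set.mem_setOf_eq]
    constructor
    · intro h k hk
      exact ⟨primSeq τ x k, rfl, h k hk⟩
    · rintro h k hk
      obtain ⟨v, hv, hc⟩ := h k hk
      rw [hv]
      exact hc
  rw [this]
  exact MeasurableSet.iInter fun k => MeasurableSet.iInter fun _ =>
    MeasurableSet.iUnion fun v => (measurableSet_primSeq τ k v).inter (MeasurableSet.const _)

/-! ### stopped Łukasiewicz paths -/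

/-- the child-count sequence read off from a path. -/
def pathC (p : ℕ → ℤ) (k : ℕ) : ℕ := (p (k+1) - p k + 1).toNat

/-- a stopped Łukasiewicz path of length `n`. -/
def LukP (p : ℕ → ℤ) (n : ℕ) : Prop :=
  0 < n ∧ p 0 = 0 ∧ (∀ k < n, 0 ≤ p k) ∧ (∀ k, n ≤ k → p k = -1) ∧
    (∀ k < n, -1 ≤ p (k+1) - p k)

lemma LukP.unique {p : ℕ → ℤ} {n m : ℕ} (hn : LukP p n) (hm : LukP p m) : n = m := by
  by_contra h
  rcases Nat.lt_or_ge n m with h' | h'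
  · have h1 := hn.2.2.2.1 n (le_refl n)
    have h2 := hm.2.2.1 n h'
    omega
  · rcases Nat.lt_or_ge m n with h'' | h''
    · have h1 := hm.2.2.2.1 m (le_refl m)
      have h2 := hn.2.2.1 m h''
      omega
    · omega

lemma LukP.path_eq {p : ℕ → ℤ} {n : ℕ} (hp : LukP p n) :
    ∀ k ≤ n, p k = (∑ i ∈ Finset.range k, (pathC p i : ℤ)) - k := by
  intro k
  induction k with
  | zero => intro _; simp [hp.2.1]
  | succ k ih =>
    intro hk
    have hik := ih (by omega)
    have hinc := hp.2.2.2.2 k (by omega)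
    have htn : (pathC p k : ℤ) = p (k+1) - p k + 1 := Int.toNat_of_nonneg (by omega)
    rw [Finset.sum_range_succ]
    push_cast
    omega

lemma LukP.luk {p : ℕ → ℤ} {n : ℕ} (hp : LukP p n) : Luk (pathC p) n := by
  refine ⟨hp.1, ?_, ?_⟩
  · intro k hk0 hkn
    have h1 := hp.path_eq k (by omega)
    have h2 := hp.2.2.1 k hkn
    have hcast : ((∑ i ∈ Finset.range k, pathC p i : ℕ) : ℤ)
        = ∑ i ∈ Finset.range k, (pathC p i : ℤ) := by push_cast; rfl
    omega
  · have h1 := hp.path_eq n (le_refl n)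
    have h2 := hp.2.2.2.1 n (le_refl n)
    have hn := hp.1
    have : ∑ i ∈ Finset.range n, (pathC p i : ℤ) = (n : ℤ) - 1 := by omega
    have hcast : ((∑ i ∈ Finset.range n, pathC p i : ℕ) : ℤ) = (n : ℤ) - 1 := by
      push_cast
      omega
    omega

/-- a `LukP` path is determined by `n` and its child counts. -/
lemma LukP.ext {p q : ℕ → ℤ} {n : ℕ} (hp : LukP p n) (hq : LukP q n)
    (h : ∀ k < n, pathC p k = pathC q k) : p = q := by
  funext k
  rcases Nat.lt_or_ge k n with hk | hk
  · rw [hp.path_eq k (by omega), hq.path_eq k (by omega)]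
    congr 1
    apply Finset.sum_congr rfl
    intro i hi
    rw [h i (by have := Finset.mem_range.1 hi; omega)]
  · rw [hp.2.2.2.1 k hk, hq.2.2.2.1 k hk]

/-- the stopped Prim path of a plane tree is a stopped Łukasiewicz path whose child
counts are those of the tree along the Prim order. -/
lemma tree_path {τ : Finset (List ℕ)} (hτ : IsPlaneTree τ) {x : List ℕ → ℝ}
    {u : ℕ → List ℕ} (hu : IsPrimOrder τ x u) {W : ℕ → ℤ} (hW0 : W 0 = 0)
    (hWs : ∀ k < τ.card, W (k+1) = W k + childCount τ (u k) - 1) :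
    LukP (fun k => W (min k τ.card)) τ.card ∧
      ∀ k < τ.card, pathC (fun k => W (min k τ.card)) k = childCount τ (u k) := by
  set n := τ.card with hn
  have hnpos : 0 < n := Finset.card_pos.2 ⟨[], hτ.1⟩
  have htel : ∀ k ≤ n, W k = (∑ i ∈ Finset.range k, (childCount τ (u i) : ℤ)) - k := by
    intro k
    induction k with
    | zero => intro _; simp [hW0]
    | succ k ih =>
      intro hk
      have h1 := ih (by omega)
      have h2 := hWs k (by omega)
      rw [Finset.sum_range_succ]
      push_cast
      push_cast at h1
      omega
  have hsum : ∑ i ∈ Finset.range n, childCount τ (u i) = n - 1 := sum_childCount_order hτ hu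
  have hWn : W n = -1 := by
    have h1 := htel n (le_refl n)
    have hcast : ((∑ i ∈ Finset.range n, childCount τ (u i) : ℕ) : ℤ)
        = ∑ i ∈ Finset.range n, (childCount τ (u i) : ℤ) := by push_cast; rfl
    omega
  have hWnn : ∀ k < n, 0 ≤ W k := by
    intro k hk
    rcases Nat.eq_zero_or_pos k with rfl | hk0
    · rw [hW0]
    · have h1 := htel k (by omega)
      have h2 := sum_childCount_order_ge hτ hu k hk0 hk
      have hcast : ((∑ i ∈ Finset.range k, childCount τ (u i) : ℕ) : ℤ)
          = ∑ i ∈ Finset.range k, (childCount τ (u i) : ℤ) := by push_cast; rfl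
      omega
  have hq : ∀ k ≤ n, W (min k n) = W k := fun k hk => by rw [min_eq_left hk]
  have hq' : ∀ k, n ≤ k → W (min k n) = -1 := fun k hk => by rw [min_eq_right hk, hWn]
  have hinc : ∀ k < n, W (min (k+1) n) - W (min k n) = (childCount τ (u k) : ℤ) - 1 := by
    intro k hk
    rw [hq (k+1) (by omega), hq k (by omega), hWs k hk]
    ring
  constructor
  · refine ⟨hnpos, ?_, ?_, hq', ?_⟩
    · show W (min 0 n) = 0
      rw [hq 0 (by omega), hW0]
    · intro k hk
      show 0 ≤ W (min k n)
      rw [hq k (by omega)]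
      exact hWnn k hk
    · intro k hk
      show -1 ≤ W (min (k+1) n) - W (min k n)
      have h := hinc k hk
      have h2 : (0 : ℤ) ≤ (childCount τ (u k) : ℤ) := Int.natCast_nonneg _
      omega
  · intro k hk
    show (W (min (k+1) n) - W (min k n) + 1).toNat = childCount τ (u k)
    rw [hinc k hk]
    simp

/-- characterization of the stopped walk path in terms of the steps. -/
lemma walk_stopped_eq_iff {e : ℕ → ℕ} {Xw : ℕ → ℤ}
    (hXw : ∀ k, Xw k = ∑ i ∈ Finset.range k, ((e i : ℤ) - 1)) {z : ℕ}
    (hz : z = sInf {k | Xw k = -1}) {p : ℕ → ℤ} {n : ℕ} (hp : LukP p n) :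
    (fun k => Xw (min k z)) = p ↔ ∀ i < n, e i = pathC p i := by
  have hX0 : Xw 0 = 0 := by rw [hXw]; simp
  have hstep : ∀ k, Xw (k+1) = Xw k + ((e k : ℤ) - 1) := by
    intro k
    rw [hXw, hXw, Finset.sum_range_succ]
  have hnonneg : ∀ k, (∀ j ≤ k, Xw j ≠ -1) → 0 ≤ Xw k := by
    intro k
    induction k with
    | zero => intro _; rw [hX0]
    | succ k ih =>
      intro h
      have h1 := ih (fun j hj => h j (by omega))
      have h2 := hstep k
      have h3 := h (k+1) (le_refl _)
      have : (0 : ℤ) ≤ (e k : ℤ) := Int.natCast_nonneg _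
      omega
  constructor
  · intro hq
    have happ : ∀ k, Xw (min k z) = p k := fun k => congrFun hq k
    have hne : {k | Xw k = -1}.Nonempty := by
      by_contra hemp
      rw [Set.not_nonempty_iff_eq_empty] at hemp
      have hz0 : z = 0 := by rw [hz, hemp, Nat.sInf_empty]
      have := happ n
      rw [hz0, Nat.min_zero, hX0, hp.2.2.2.1 n (le_refl n)] at this
      exact absurd this (by norm_num)
    have hzmem : Xw z = -1 := by
      have := Nat.sInf_mem hne
      rwa [← hz] at this
    have hzmin : ∀ j < z, Xw j ≠ -1 := by
      intro j hj
      rw [hz] at hj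
      exact Nat.notMem_of_lt_sInf hj
    have hzn : z = n := by
      rcases lt_trichotomy z n with h | h | h
      · have := happ z
        rw [min_self, hzmem] at this
        have h2 := hp.2.2.1 z h
        omega
      · exact h
      · have := happ n
        rw [min_eq_left (by omega), hp.2.2.2.1 n (le_refl n)] at this
        exact absurd this (hzmin n h)
    subst hzn
    intro i hi
    have h1 := happ i
    have h2 := happ (i+1)
    rw [min_eq_left (by omega)] at h1
    rw [min_eq_left (by omega)] at h2
    have h3 := hstep i
    have : (e i : ℤ) = p (i+1) - p i + 1 := by omega
    rw [pathC, ← this, Int.toNat_natCast]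
  · intro he
    have hXp : ∀ k ≤ n, Xw k = p k := by
      intro k
      induction k with
      | zero => intro _; rw [hX0, hp.2.1]
      | succ k ih =>
        intro hk
        have h1 := ih (by omega)
        have h2 := hstep k
        have h3 := he k (by omega)
        have h4 : (pathC p k : ℤ) = p (k+1) - p k + 1 :=
          Int.toNat_of_nonneg (by have := hp.2.2.2.2 k (by omega); omega)
        rw [h3] at h2
        omega
    have hmem : Xw n = -1 := by
      rw [hXp n (le_refl n), hp.2.2.2.1 n (le_refl n)]
    have hmin : ∀ k < n, Xw k ≠ -1 := by
      intro k hk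
      rw [hXp k (by omega)]
      have := hp.2.2.1 k hk
      omega
    have hzn : z = n := by
      rw [hz]
      apply le_antisymm
      · exact Nat.sInf_le hmem
      · by_contra hlt
        push_neg at hlt
        have hmem' := Nat.sInf_mem (⟨n, hmem⟩ : {k | Xw k = -1}.Nonempty)
        exact hmin _ hlt hmem'
    funext k
    rw [hzn]
    rcases le_or_gt k n with hk | hk
    · rw [min_eq_left hk]
      exact hXp k hk
    · rw [min_eq_right (by omega), hmem, hp.2.2.2.1 k (by omega)]

/-! ### the set of stopped Łukasiewicz paths -/

def LukC : Set (ℕ → ℤ) := {p | ∃ n, LukP p n}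

lemma LukC_countable : LukC.Countable := by
  have : LukC ⊆ ⋃ n : ℕ, Set.range (fun q : Fin n → ℤ =>
      (fun k => if h : k < n then q ⟨k, h⟩ else -1 : ℕ → ℤ)) := by
    rintro p ⟨n, hp⟩
    apply Set.mem_iUnion.2
    refine ⟨n, Set.mem_range.2 ⟨fun i => p i, ?_⟩⟩
    funext k
    by_cases hk : k < n
    · rw [dif_pos hk]
    · rw [dif_neg hk, hp.2.2.2.1 k (by omega)]
  exact Set.Countable.mono this (Set.countable_iUnion fun n => Set.countable_range _)

/-- first hitting time of `-1` of a path. -/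
noncomputable def hitTime (q : ℕ → ℤ) : ℕ := sInf {k | q k = -1}

lemma measurable_hitTime : Measurable hitTime := by
  apply measurable_to_countable'
  intro n
  have hEmeas : ∀ m : ℕ, MeasurableSet {q : ℕ → ℤ | q m = -1} := fun m =>
    (measurable_pi_apply m) (measurableSet_singleton (-1))
  rcases Nat.eq_zero_or_pos n with rfl | hn
  · have hset : hitTime ⁻¹' {0} = {q : ℕ → ℤ | q 0 = -1} ∪ (⋂ k, {q : ℕ → ℤ | q k ≠ -1}) := by
      ext q
      simp only [Set.mem_preimage, Set.mem_singleton_iff, Set.mem_union,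
        Set.mem_iInter, Set.mem_setOf_eq, hitTime]
      constructor
      · intro h
        by_cases hne : {k | q k = -1}.Nonempty
        · left
          have := Nat.sInf_mem hne
          rwa [h] at this
        · right
          intro k hk
          exact hne ⟨k, hk⟩
      · rintro (h1 | h)
        · exact le_antisymm (Nat.sInf_le h1) (Nat.zero_le _)
        · rw [show {k | q k = -1} = ∅ from Set.eq_empty_iff_forall_notMem.2 h, Nat.sInf_empty]
    rw [hset]
    exact (hEmeas 0).union (MeasurableSet.iInter fun k => (hEmeas k).compl)
  · have hset : hitTime ⁻¹' {n}
        = {q : ℕ → ℤ | q n = -1} ∩ ⋂ k, ⋂ (_ : k < n), {q : ℕ → ℤ | ¬ q k = -1} := by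
      ext q
      simp only [Set.mem_preimage, Set.mem_singleton_iff, Set.mem_inter_iff,
        Set.mem_iInter, Set.mem_setOf_eq, hitTime]
      constructor
      · intro h
        by_cases hne : {k | q k = -1}.Nonempty
        · have hmem := Nat.sInf_mem hne
          rw [h] at hmem
          exact ⟨hmem, fun k hk => Nat.notMem_of_lt_sInf (h ▸ hk)⟩
        · exfalso
          rw [Set.not_nonempty_iff_eq_empty] at hne
          rw [hne, Nat.sInf_empty] at h
          omega
      · rintro ⟨h1, h2⟩
        apply le_antisymm (Nat.sInf_le h1)
        by_contra hlt
        push_neg at hlt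
        exact h2 _ hlt (Nat.sInf_mem (⟨n, h1⟩ : {k | q k = -1}.Nonempty))
    rw [hset]
    exact (hEmeas n).inter (MeasurableSet.iInter fun k => MeasurableSet.iInter fun _ =>
      (hEmeas k).compl)

/-- two probability measures concentrated on a countable set with matching point
masses are equal. -/
lemma measure_eq_of_countable_support {m1 m2 : Measure (ℕ → ℤ)}
    [IsProbabilityMeasure m1] [IsProbabilityMeasure m2] {C : Set (ℕ → ℤ)}
    (hC : C.Countable) (h1 : m1 C = 1) (hmass : ∀ p ∈ C, m1 {p} = m2 {p}) : m1 = m2 := by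
  have hCm : MeasurableSet C := hC.measurableSet
  have key : ∀ (m : Measure (ℕ → ℤ)) (A : Set (ℕ → ℤ)), MeasurableSet A →
      m (A ∩ C) = ∑' p : C, m (A ∩ {(p : ℕ → ℤ)}) := by
    intro m A hA
    have hrw : A ∩ C = ⋃ p ∈ C, A ∩ {p} := by
      ext q
      simp only [Set.mem_inter_iff, Set.mem_iUnion, Set.mem_singleton_iff]
      constructor
      · rintro ⟨hqA, hqC⟩
        exact ⟨q, hqC, hqA, rfl⟩
      · rintro ⟨p, hp, hqA, rfl⟩
        exact ⟨hqA, hp⟩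
    rw [hrw, measure_biUnion hC ?_ (fun p _ => hA.inter (measurableSet_singleton _))]
    intro p _ p' _ hne
    apply Set.disjoint_of_subset Set.inter_subset_right Set.inter_subset_right
    simp only [Set.disjoint_singleton_left, Set.mem_singleton_iff]
    exact hne
  have hm1C : m1 C = ∑' p : C, m1 {(p : ℕ → ℤ)} := by
    simpa [Set.univ_inter] using key m1 Set.univ MeasurableSet.univ
  have hm2C' : m2 C = ∑' p : C, m2 {(p : ℕ → ℤ)} := by
    simpa [Set.univ_inter] using key m2 Set.univ MeasurableSet.univ
  have hm2C : m2 C = 1 := by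
    have ht : ∑' p : C, m1 {(p : ℕ → ℤ)} = ∑' p : C, m2 {(p : ℕ → ℤ)} :=
      tsum_congr (fun p => hmass p p.2)
    rw [hm2C', ← ht, ← hm1C, h1]
  apply Measure.ext
  intro A hA
  have d1 : m1 (A \ C) = 0 := by
    have hc : m1 Cᶜ = 0 := by
      rw [prob_compl_eq_one_sub hCm, h1, tsub_self]
    exact measure_mono_null (fun q hq => hq.2) hc
  have d2 : m2 (A \ C) = 0 := by
    have hc : m2 Cᶜ = 0 := by
      rw [prob_compl_eq_one_sub hCm, hm2C, tsub_self]
    exact measure_mono_null (fun q hq => hq.2) hc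
  have e1 := measure_inter_add_diff (μ := m1) A hCm
  have e2 := measure_inter_add_diff (μ := m2) A hCm
  have hAC : m1 (A ∩ C) = m2 (A ∩ C) := by
    rw [key m1 A hA, key m2 A hA]
    apply tsum_congr
    intro p
    by_cases hp : (p : ℕ → ℤ) ∈ A
    · rw [Set.inter_eq_self_of_subset_right (Set.singleton_subset_iff.2 hp),
        hmass p p.2]
    · simp [Set.inter_singleton_eq_empty.2 hp]
  calc m1 A = m1 (A ∩ C) + m1 (A \ C) := e1.symm
    _ = m2 (A ∩ C) + m2 (A \ C) := by rw [d1, d2, hAC]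
    _ = m2 A := e2

lemma hitTime_LukP {p : ℕ → ℤ} {n : ℕ} (hp : LukP p n) : hitTime p = n := by
  rw [hitTime]
  apply le_antisymm
  · exact Nat.sInf_le (hp.2.2.2.1 n (le_refl n))
  · by_contra hlt
    push_neg at hlt
    have hmem := Nat.sInf_mem (⟨n, hp.2.2.2.1 n (le_refl n)⟩ : {k | p k = -1}.Nonempty)
    have := hp.2.2.1 _ hlt
    rw [Set.mem_setOf_eq] at hmem
    omega

lemma hitTime_min_sInf (g : ℕ → ℤ) :
    hitTime (fun k => g (min k (sInf {k | g k = -1}))) = sInf {k | g k = -1} := by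
  by_cases hne : {k | g k = -1}.Nonempty
  · have hmem := Nat.sInf_mem hne
    rw [Set.mem_setOf_eq] at hmem
    rw [hitTime]
    apply le_antisymm
    · apply Nat.sInf_le
      rw [Set.mem_setOf_eq, min_self]
      exact hmem
    · by_contra hlt
      push_neg at hlt
      have hne2 : {k | g (min k (sInf {k | g k = -1})) = -1}.Nonempty :=
        ⟨sInf {k | g k = -1}, by rw [Set.mem_setOf_eq, min_self]; exact hmem⟩
      have hmem2 := Nat.sInf_mem hne2
      rw [Set.mem_setOf_eq] at hmem2
      rw [min_eq_left (le_of_lt hlt)] at hmem2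
      have := Nat.sInf_le (show sInf {k | g (min k (sInf {k | g k = -1})) = -1}
        ∈ {k | g k = -1} from hmem2)
      omega
  · rw [Set.not_nonempty_iff_eq_empty] at hne
    rw [hne, Nat.sInf_empty, hitTime]
    have : {k | g (min k 0) = -1} = ∅ := by
      apply Set.eq_empty_iff_forall_notMem.2
      intro k hk
      rw [Set.mem_setOf_eq, Nat.min_zero] at hk
      have : (0 : ℕ) ∈ ({k | g k = -1} : Set ℕ) := hk
      rw [hne] at this
      exact this
    rw [this, Nat.sInf_empty]

end GWPrim

open GWPrim

theorem stmt_6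
    {Ω : Type*} [MeasurableSpace Ω] (P : Measure Ω) [IsProbabilityMeasure P]
    {Ω' : Type*} [MeasurableSpace Ω'] (P' : Measure Ω') [IsProbabilityMeasure P']
    (μ : ℕ → ℝ) (hμnn : ∀ k, 0 ≤ μ k) (hμsum : ∑' k, μ k = 1)
    (hμmean : ∑' k : ℕ, (k : ℝ) * μ k = 1) (hμ0 : 0 < μ 0) (hμ01 : μ 0 + μ 1 < 1)
    -- the Galton–Watson tree
    (T : Ω → Finset (List ℕ)) (hTmeas : Measurable T)
    (hTtree : ∀ᵐ ω ∂P, IsPlaneTree (T ω))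
    (hTlaw : ∀ τ : Finset (List ℕ), IsPlaneTree τ →
      P {ω | T ω = τ} = ∏ v ∈ τ, ENNReal.ofReal (μ (childCount τ v)))
    -- i.i.d. positive weights with diffuse law, independent of the tree
    (w : List ℕ → Ω → ℝ) (hwmeas : ∀ v, Measurable (w v))
    (ν : Measure ℝ) (hν : IsProbabilityMeasure ν)
    (hwlaw : ∀ v, Measure.map (w v) P = ν)
    (hwindep : iIndepFun w P)
    (hνpos : ν (Iic 0) = 0) (hνdiffuse : ∀ x : ℝ, ν {x} = 0)
    (hwT : IndepFun (fun ω => fun v => w v ω) T P)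
    -- the Prim order and the Prim path of the tree
    (prim : Ω → ℕ → List ℕ)
    (hprim : ∀ᵐ ω ∂P, IsPrimOrder (T ω) (fun v => w v ω) (prim ω))
    (Wp : Ω → ℕ → ℤ) (hWp0 : ∀ ω, Wp ω 0 = 0)
    (hWps : ∀ᵐ ω ∂P, ∀ k < (T ω).card,
      Wp ω (k + 1) = Wp ω k + childCount (T ω) (prim ω k) - 1)
    (hWpmeas : Measurable fun ω => fun k => Wp ω (min k (T ω).card))
    -- the random walk with step law `μ̂(k) = μ(k+1)`
    (η : ℕ → Ω' → ℕ) (hηmeas : ∀ k, Measurable (η k))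
    (hηindep : iIndepFun η P')
    (hηlaw : ∀ k j, P' {ω' | η k ω' = j} = ENNReal.ofReal (μ j))
    (X : Ω' → ℕ → ℤ)
    (hX : ∀ ω' k, X ω' k = ∑ i ∈ Finset.range k, ((η i ω' : ℤ) - 1))
    (ζ₁ : Ω' → ℕ) (hζ₁ : ∀ ω', ζ₁ ω' = sInf {k | X ω' k = -1})
    (hXmeas : Measurable fun ω' => fun k => X ω' (min k (ζ₁ ω'))) :
    Measure.map (fun ω => fun k => Wp ω (min k (T ω).card)) P
      = Measure.map (fun ω' => fun k => X ω' (min k (ζ₁ ω'))) P'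
    ∧ Measure.map (fun ω => (T ω).card) P = Measure.map ζ₁ P' := by
  classical
  have hWmap : Measurable (fun ω => fun v => w v ω) := measurable_pi_lambda _ hwmeas
  -- a.s. the weights are injective
  have hinjAE : ∀ᵐ ω ∂P, Function.Injective (fun v => w v ω) := by
    have hpair : ∀ u v : List ℕ, u ≠ v → P {ω | w u ω = w v ω} = 0 := by
      intro u v huv
      have hind : IndepFun (w u) (w v) P := hwindep.indepFun huv
      have hmap : Measure.map (fun ω => (w u ω, w v ω)) P
          = (Measure.map (w u) P).prod (Measure.map (w v) P) :=
        (indepFun_iff_map_prod_eq_prod_map_map (hwmeas u).aemeasurable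
          (hwmeas v).aemeasurable).1 hind
      rw [hwlaw u, hwlaw v] at hmap
      have hdiag : MeasurableSet {q : ℝ × ℝ | q.1 = q.2} :=
        measurableSet_eq_fun measurable_fst measurable_snd
      have h1 : P {ω | w u ω = w v ω}
          = Measure.map (fun ω => (w u ω, w v ω)) P {q : ℝ × ℝ | q.1 = q.2} := by
        rw [Measure.map_apply ((hwmeas u).prodMk (hwmeas v)) hdiag]
        rfl
      rw [h1, hmap, Measure.prod_apply hdiag]
      have h2 : ∀ a : ℝ, ν (Prod.mk a ⁻¹' {q : ℝ × ℝ | q.1 = q.2}) = 0 := by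
        intro a
        have : Prod.mk a ⁻¹' {q : ℝ × ℝ | q.1 = q.2} = {a} := by
          ext b
          simp [eq_comm]
        rw [this, hνdiffuse]
      simp only [h2]
      simp
    have hU : P (⋃ (q : List ℕ × List ℕ) (_ : q.1 ≠ q.2), {ω | w q.1 ω = w q.2 ω}) = 0 :=
      measure_iUnion_null fun q => measure_iUnion_null fun hq => hpair q.1 q.2 hq
    rw [MeasureTheory.ae_iff]
    apply measure_mono_null ?_ hU
    intro ω hω
    rw [Set.mem_setOf_eq, Function.not_injective_iff] at hω
    obtain ⟨a, b, hab, hne⟩ := hω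
    exact Set.mem_iUnion.2 ⟨(a, b), Set.mem_iUnion.2 ⟨hne, hab⟩⟩
  -- the good event
  have hG : ∀ᵐ ω ∂P, IsPlaneTree (T ω)
      ∧ IsPrimOrder (T ω) (fun v => w v ω) (prim ω)
      ∧ (∀ k < (T ω).card, Wp ω (k + 1) = Wp ω k + childCount (T ω) (prim ω k) - 1)
      ∧ Function.Injective (fun v => w v ω) := by
    filter_upwards [hTtree, hprim, hWps, hinjAE] with ω h1 h2 h3 h4
    exact ⟨h1, h2, h3, h4⟩
  -- pointwise characterization on the good event
  have hiff : ∀ ω, IsPlaneTree (T ω)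
      → IsPrimOrder (T ω) (fun v => w v ω) (prim ω)
      → (∀ k < (T ω).card, Wp ω (k + 1) = Wp ω k + childCount (T ω) (prim ω k) - 1)
      → Function.Injective (fun v => w v ω)
      → ∀ (p : ℕ → ℤ) (n : ℕ), LukP p n →
      ((fun k => Wp ω (min k (T ω).card)) = p ↔
        ((T ω).card = n ∧ (fun v => w v ω) ∈ WS (T ω) (pathC p) n)) := by
    intro ω h1 h2 h3 h4 p n hp
    obtain ⟨hq, hc⟩ := tree_path h1 h2 (hWp0 ω) h3
    have hprim_eq : ∀ k < (T ω).card, prim ω k = primSeq (T ω) (fun v => w v ω) k :=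
      prim_unique h1 h4.injOn h2
    constructor
    · intro hEq
      rw [hEq] at hq hc
      have hn : n = (T ω).card := hp.unique hq
      subst hn
      refine ⟨rfl, ?_⟩
      intro k hk
      rw [← hprim_eq k hk]
      exact (hc k hk).symm
    · rintro ⟨hn, hws⟩
      have hqn : LukP (fun k => Wp ω (min k (T ω).card)) n := hn ▸ hq
      apply LukP.ext hqn hp
      intro k hk
      rw [hc k (by omega : k < (T ω).card), hprim_eq k (by omega)]
      exact hws k hk
  -- LHS point masses
  have hmassL : ∀ (p : ℕ → ℤ) (n : ℕ), LukP p n →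
      P ((fun ω => fun k => Wp ω (min k (T ω).card)) ⁻¹' {p})
        = ∏ k ∈ Finset.range n, ENNReal.ofReal (μ (pathC p k)) := by
    intro p n hp
    have hLuk : Luk (pathC p) n := hp.luk
    -- countable family of candidate trees
    have hset : ((fun ω => fun k => Wp ω (min k (T ω).card)) ⁻¹' {p})
        =ᵐ[P] ⋃ τ : {τ : Finset (List ℕ) // IsPlaneTree τ ∧ τ.card = n},
          ({ω | T ω = τ.1} ∩ (fun ω => fun v => w v ω) ⁻¹' WS τ.1 (pathC p) n) := by
      rw [Filter.eventuallyEq_set]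
      filter_upwards [hG] with ω hg
      obtain ⟨h1, h2, h3, h4⟩ := hg
      rw [Set.mem_preimage, Set.mem_singleton_iff]
      constructor
      · intro hEq
        obtain ⟨hn, hws⟩ := (hiff ω h1 h2 h3 h4 p n hp).1 hEq
        exact Set.mem_iUnion.2 ⟨⟨T ω, h1, hn⟩, rfl, hws⟩
      · intro hmem
        obtain ⟨τ, hTτ, hws⟩ := Set.mem_iUnion.1 hmem
        rw [Set.mem_setOf_eq] at hTτ
        refine (hiff ω h1 h2 h3 h4 p n hp).2 ⟨?_, ?_⟩
        · rw [hTτ]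
          exact τ.2.2
        · rw [hTτ]
          exact hws
    rw [measure_congr hset]
    have hmeasA : ∀ τ : {τ : Finset (List ℕ) // IsPlaneTree τ ∧ τ.card = n},
        MeasurableSet ({ω | T ω = τ.1} ∩ (fun ω => fun v => w v ω) ⁻¹' WS τ.1 (pathC p) n) :=
      fun τ => (hTmeas (show MeasurableSet {τ.1} from trivial)).inter
        (hWmap (measurableSet_WS _ _ _))
    have hdisjA : Pairwise (Function.onFun Disjoint (fun τ : {τ : Finset (List ℕ) // IsPlaneTree τ ∧ τ.card = n} =>
        {ω | T ω = τ.1} ∩ (fun ω => fun v => w v ω) ⁻¹' WS τ.1 (pathC p) n)) := by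
      intro τ τ' hne
      apply Set.disjoint_left.2
      intro ω hω hω'
      exact hne (Subtype.ext (hω.1.symm.trans hω'.1))
    rw [measure_iUnion hdisjA hmeasA]
    have hterm : ∀ τ : {τ : Finset (List ℕ) // IsPlaneTree τ ∧ τ.card = n},
        P ({ω | T ω = τ.1} ∩ (fun ω => fun v => w v ω) ⁻¹' WS τ.1 (pathC p) n)
          = (∏ k ∈ Finset.range n, ENNReal.ofReal (μ (pathC p k)))
            * P ((fun ω => fun v => w v ω) ⁻¹' WS τ.1 (pathC p) n) := by
      intro τ
      have hIndep := hwT.measure_inter_preimage_eq_mul (WS τ.1 (pathC p) n) {τ.1}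
        (measurableSet_WS _ _ _) trivial
      rw [Set.inter_comm,
        show (fun ω => fun v => w v ω) ⁻¹' WS τ.1 (pathC p) n ∩ {ω | T ω = τ.1}
          = (fun ω => fun v => w v ω) ⁻¹' WS τ.1 (pathC p) n ∩ T ⁻¹' {τ.1} from rfl,
        hIndep]
      rcases Set.eq_empty_or_nonempty (WS τ.1 (pathC p) n) with hWS | hWS
      · rw [hWS]
        simp
      · obtain ⟨x₀, hx₀⟩ := hWS
        have hTprob : P (T ⁻¹' {τ.1})
            = ∏ k ∈ Finset.range n, ENNReal.ofReal (μ (pathC p k)) := by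
          rw [show T ⁻¹' {τ.1} = {ω | T ω = τ.1} from rfl, hTlaw τ.1 τ.2.1]
          have hord := primSeq_isPrimOrder τ.2.1 x₀
          have hinj : ∀ a ∈ Finset.range τ.1.card, ∀ b ∈ Finset.range τ.1.card,
              primSeq τ.1 x₀ a = primSeq τ.1 x₀ b → a = b := fun a ha b hb h =>
            primSeq_injOn τ.2.1 x₀ a b (Finset.mem_range.1 ha) (Finset.mem_range.1 hb) h
          calc ∏ v ∈ τ.1, ENNReal.ofReal (μ (childCount τ.1 v))
              = ∏ v ∈ (Finset.range τ.1.card).image (primSeq τ.1 x₀),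
                  ENNReal.ofReal (μ (childCount τ.1 v)) := by
                rw [primOrder_image τ.2.1 hord]
            _ = ∏ k ∈ Finset.range τ.1.card,
                  ENNReal.ofReal (μ (childCount τ.1 (primSeq τ.1 x₀ k))) :=
                Finset.prod_image hinj
            _ = ∏ k ∈ Finset.range n, ENNReal.ofReal (μ (pathC p k)) := by
                rw [τ.2.2]
                exact Finset.prod_congr rfl fun k hk => by
                  rw [hx₀ k (Finset.mem_range.1 hk)]
        rw [hTprob, mul_comm]
    rw [tsum_congr hterm, ENNReal.tsum_mul_left]
    have hcov : ∑' τ : {τ : Finset (List ℕ) // IsPlaneTree τ ∧ τ.card = n},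
        P ((fun ω => fun v => w v ω) ⁻¹' WS τ.1 (pathC p) n) = 1 := by
      have hdisjB : Pairwise (Function.onFun Disjoint (fun τ : {τ : Finset (List ℕ) // IsPlaneTree τ ∧ τ.card = n} =>
          (fun ω => fun v => w v ω) ⁻¹' WS τ.1 (pathC p) n)) := by
        intro τ τ' hne
        apply Set.disjoint_left.2
        intro ω hω hω'
        exact hne (Subtype.ext ((recT_unique hLuk τ.2.1 τ.2.2 hω).trans
          (recT_unique hLuk τ'.2.1 τ'.2.2 hω').symm))
      rw [← measure_iUnion hdisjB (fun τ => hWmap (measurableSet_WS _ _ _))]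
      have huniv : (⋃ τ : {τ : Finset (List ℕ) // IsPlaneTree τ ∧ τ.card = n},
          (fun ω => fun v => w v ω) ⁻¹' WS τ.1 (pathC p) n) = Set.univ := by
        rw [Set.eq_univ_iff_forall]
        intro ω
        obtain ⟨ht, hcard, hcs⟩ := recT_spec (x := fun v => w v ω) hLuk
        exact Set.mem_iUnion.2 ⟨⟨recT (fun v => w v ω) (pathC p) n, ht, hcard⟩,
          fun k hk => hcs k hk⟩
      rw [huniv, measure_univ]
    rw [hcov, mul_one]
  -- LHS is supported on Łukasiewicz paths
  have hsupp : P ((fun ω => fun k => Wp ω (min k (T ω).card)) ⁻¹' LukC) = 1 := by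
    have hae : ∀ᵐ ω ∂P, ω ∈ (fun ω => fun k => Wp ω (min k (T ω).card)) ⁻¹' LukC := by
      filter_upwards [hG] with ω hg
      obtain ⟨h1, h2, h3, _⟩ := hg
      exact ⟨(T ω).card, (tree_path h1 h2 (hWp0 ω) h3).1⟩
    calc P ((fun ω => fun k => Wp ω (min k (T ω).card)) ⁻¹' LukC)
        = P Set.univ := measure_congr (Filter.eventuallyEq_univ.2 hae)
      _ = 1 := measure_univ
  -- RHS point masses
  have hmassR : ∀ (p : ℕ → ℤ) (n : ℕ), LukP p n →
      P' ((fun ω' => fun k => X ω' (min k (ζ₁ ω'))) ⁻¹' {p})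
        = ∏ k ∈ Finset.range n, ENNReal.ofReal (μ (pathC p k)) := by
    intro p n hp
    have hEv : ((fun ω' => fun k => X ω' (min k (ζ₁ ω'))) ⁻¹' {p})
        = ⋂ i ∈ Finset.range n, (η i) ⁻¹' ({pathC p i} : Set ℕ) := by
      ext ω'
      simp only [Set.mem_preimage, Set.mem_singleton_iff, Set.mem_iInter, Finset.mem_range]
      exact walk_stopped_eq_iff (hX ω') (hζ₁ ω') hp
    rw [hEv, hηindep.measure_inter_preimage_eq_mul (Finset.range n)
      (sets := fun i => ({pathC p i} : Set ℕ)) (fun i _ => measurableSet_singleton _)]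
    exact Finset.prod_congr rfl fun i _ => hηlaw i (pathC p i)
  -- the two path laws
  have hprob1 : IsProbabilityMeasure (Measure.map (fun ω => fun k => Wp ω (min k (T ω).card)) P) :=
    Measure.isProbabilityMeasure_map hWpmeas.aemeasurable
  have hprob2 : IsProbabilityMeasure (Measure.map (fun ω' => fun k => X ω' (min k (ζ₁ ω'))) P') :=
    Measure.isProbabilityMeasure_map hXmeas.aemeasurable
  have hmapmass : ∀ p ∈ LukC,
      Measure.map (fun ω => fun k => Wp ω (min k (T ω).card)) P {p}
        = Measure.map (fun ω' => fun k => X ω' (min k (ζ₁ ω'))) P' {p} := by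
    rintro p ⟨n, hp⟩
    rw [Measure.map_apply hWpmeas (measurableSet_singleton p),
      Measure.map_apply hXmeas (measurableSet_singleton p),
      hmassL p n hp, hmassR p n hp]
  have hmapsupp : Measure.map (fun ω => fun k => Wp ω (min k (T ω).card)) P LukC = 1 := by
    rw [Measure.map_apply hWpmeas LukC_countable.measurableSet]
    exact hsupp
  have hfirst : Measure.map (fun ω => fun k => Wp ω (min k (T ω).card)) P
      = Measure.map (fun ω' => fun k => X ω' (min k (ζ₁ ω'))) P' :=
    measure_eq_of_countable_support LukC_countable hmapsupp hmapmass
  refine ⟨hfirst, ?_⟩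
  -- the second identity via the hitting time functional
  have hcardmeas : Measurable (fun ω => (T ω).card) :=
    (measurable_from_top (f := Finset.card)).comp hTmeas
  have he1 : (fun ω => (T ω).card) =ᵐ[P] (hitTime ∘ (fun ω => fun k => Wp ω (min k (T ω).card))) := by
    filter_upwards [hG] with ω hg
    obtain ⟨h1, h2, h3, _⟩ := hg
    exact (hitTime_LukP (tree_path h1 h2 (hWp0 ω) h3).1).symm
  have he2 : ζ₁ = (hitTime ∘ (fun ω' => fun k => X ω' (min k (ζ₁ ω')))) := by
    funext ω'
    rw [Function.comp_apply, hζ₁ ω']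
    exact (hitTime_min_sInf (X ω')).symm
  calc Measure.map (fun ω => (T ω).card) P
      = Measure.map (hitTime ∘ (fun ω => fun k => Wp ω (min k (T ω).card))) P :=
        Measure.map_congr he1
    _ = Measure.map hitTime (Measure.map (fun ω => fun k => Wp ω (min k (T ω).card)) P) :=
        (Measure.map_map measurable_hitTime hWpmeas).symm
    _ = Measure.map hitTime (Measure.map (fun ω' => fun k => X ω' (min k (ζ₁ ω'))) P') := by
        rw [hfirst]
    _ = Measure.map (hitTime ∘ (fun ω' => fun k => X ω' (min k (ζ₁ ω')))) P' :=
        Measure.map_map measurable_hitTime hXmeas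
    _ = Measure.map ζ₁ P' := by rw [← he2]
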